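/- arXiv:1012.1518 — 3 statements merged into one kernel-verified Lean document; each statement's English description precedes it below -/
import Mathlib

section
/- Dirichlet's divisor asymptotic: Σ_{n ≤ x} d(n) = x log x + (2γ - 1)x + O(√x) as x → ∞, where γ is the Euler–Mascheroni constant. -/
open Finset

open Finset

lemma hyperbola_identity (M N : ℕ) (h1 : N * N ≤ M) (h2 : M < (N + 1) * (N + 1)) :
    (∑ n ∈ Finset.Icc 1 M, (Nat.divisors n).card) + N * N
      = 2 * ∑ a ∈ Finset.Icc 1 N, M / a := by
  set P : Finset (ℕ × ℕ) :=
    ((Finset.Icc 1 M) ×ˢ (Finset.Icc 1 M)).filter (fun p => p.1 * p.2 ≤ M) with hP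
  have memP : ∀ p : ℕ × ℕ, p ∈ P ↔ 1 ≤ p.1 ∧ 1 ≤ p.2 ∧ p.1 * p.2 ≤ M := by
    intro p
    simp only [hP, mem_filter, mem_product, mem_Icc]
    constructor
    · rintro ⟨⟨⟨h1, _⟩, ⟨h2, _⟩⟩, h3⟩; exact ⟨h1, h2, h3⟩
    · rintro ⟨ha, hb, hab⟩
      refine ⟨⟨⟨ha, ?_⟩, ⟨hb, ?_⟩⟩, hab⟩
      · calc p.1 ≤ p.1 * p.2 := Nat.le_mul_of_pos_right _ hb
          _ ≤ M := hab
      · calc p.2 ≤ p.1 * p.2 := Nat.le_mul_of_pos_left _ ha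
          _ ≤ M := hab
  -- Step A : sum of divisor counts = card P
  have stepA : ∑ n ∈ Finset.Icc 1 M, (Nat.divisors n).card = P.card := by
    have hfib : P.card = ∑ n ∈ Finset.Icc 1 M,
        (P.filter (fun p => p.1 * p.2 = n)).card := by
      apply Finset.card_eq_sum_card_fiberwise
      intro p hp
      rw [Finset.mem_coe, memP] at hp
      rw [Finset.mem_coe, mem_Icc]
      exact ⟨Nat.one_le_iff_ne_zero.2 (Nat.mul_ne_zero (by omega) (by omega)), hp.2.2⟩
    rw [hfib]
    apply Finset.sum_congr rfl
    intro n hn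
    rw [mem_Icc] at hn
    have : P.filter (fun p => p.1 * p.2 = n) = Nat.divisorsAntidiagonal n := by
      ext p
      rw [mem_filter, memP, Nat.mem_divisorsAntidiagonal]
      constructor
      · rintro ⟨⟨_, _, _⟩, h⟩; exact ⟨h, by omega⟩
      · rintro ⟨h, hn0⟩
        have hp1 : p.1 ≠ 0 := by rintro h0; rw [h0] at h; simp at h; omega
        have hp2 : p.2 ≠ 0 := by rintro h0; rw [h0] at h; simp at h; omega
        exact ⟨⟨Nat.pos_of_ne_zero hp1, Nat.pos_of_ne_zero hp2, by omega⟩, h⟩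
    rw [this, ← Nat.map_div_right_divisors, Finset.card_map]
  -- Step B : inclusion-exclusion
  set P1 : Finset (ℕ × ℕ) := P.filter (fun p => p.1 ≤ N) with hP1
  set P2 : Finset (ℕ × ℕ) := P.filter (fun p => p.2 ≤ N) with hP2
  have hunion : P1 ∪ P2 = P := by
    rw [hP1, hP2, ← Finset.filter_or]
    apply Finset.filter_true_of_mem
    intro p hp
    rw [memP] at hp
    by_contra hc
    push_neg at hc
    have : (N + 1) * (N + 1) ≤ p.1 * p.2 := Nat.mul_le_mul (by omega) (by omega)
    omega
  have hinter : P1 ∩ P2 = (Finset.Icc 1 N) ×ˢ (Finset.Icc 1 N) := by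
    ext p
    rw [Finset.mem_inter, hP1, hP2, mem_filter, memP, mem_filter, memP, mem_product, mem_Icc, mem_Icc]
    constructor
    · rintro ⟨⟨⟨h1, h2, _⟩, h4⟩, _, h5⟩; exact ⟨⟨h1, h4⟩, h2, h5⟩
    · rintro ⟨⟨ha1, ha2⟩, hb1, hb2⟩
      have hmul : p.1 * p.2 ≤ N * N := Nat.mul_le_mul ha2 hb2
      exact ⟨⟨⟨ha1, hb1, by omega⟩, ha2⟩, ⟨ha1, hb1, by omega⟩, hb2⟩
  have hcards : P1.card + P2.card = P.card + N * N := by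
    have h := Finset.card_union_add_card_inter P1 P2
    rw [hunion, hinter, Finset.card_product, Nat.card_Icc] at h
    simp only [Nat.add_sub_cancel] at h
    omega
  -- Step C : counting P1
  have stepC : P1.card = ∑ a ∈ Finset.Icc 1 N, M / a := by
    have hfib : P1.card = ∑ a ∈ Finset.Icc 1 N,
        (P1.filter (fun p => p.1 = a)).card := by
      apply Finset.card_eq_sum_card_fiberwise
      intro p hp
      rw [hP1, Finset.mem_coe, mem_filter, memP] at hp
      rw [Finset.mem_coe, mem_Icc]
      exact ⟨hp.1.1, hp.2⟩
    rw [hfib]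
    apply Finset.sum_congr rfl
    intro a ha
    rw [mem_Icc] at ha
    have hfa : P1.filter (fun p => p.1 = a)
        = ({a} : Finset ℕ) ×ˢ Finset.Icc 1 (M / a) := by
      ext p
      rw [hP1, mem_filter, mem_filter, memP, mem_product, mem_singleton, mem_Icc]
      constructor
      · rintro ⟨⟨⟨h1, h2, h3⟩, h4⟩, h5⟩
        refine ⟨h5, h2, ?_⟩
        rw [Nat.le_div_iff_mul_le (show 0 < a by omega), mul_comm, ← h5]
        exact h3
      · rintro ⟨h5, hb1, hb2⟩
        rw [Nat.le_div_iff_mul_le (show 0 < a by omega)] at hb2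
        refine ⟨⟨⟨by omega, hb1, ?_⟩, by omega⟩, h5⟩
        rw [h5, mul_comm]
        exact hb2
    rw [hfa, Finset.card_product, Finset.card_singleton, Nat.card_Icc]
    simp
  -- Step C' : P2 by symmetry
  have hswap : P2.card = P1.card := by
    apply Finset.card_bij (fun p _ => p.swap)
    · intro p hp
      rw [hP2, mem_filter, memP] at hp
      rw [hP1, mem_filter, memP]
      simp only [Prod.fst_swap, Prod.snd_swap]
      exact ⟨⟨hp.1.2.1, hp.1.1, by rw [mul_comm]; exact hp.1.2.2⟩, hp.2⟩
    · intro p _ q _ h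
      exact Prod.swap_injective h
    · intro p hp
      refine ⟨p.swap, ?_, by simp⟩
      rw [hP1, mem_filter, memP] at hp
      rw [hP2, mem_filter, memP]
      simp only [Prod.fst_swap, Prod.snd_swap]
      exact ⟨⟨hp.1.2.1, hp.1.1, by rw [mul_comm]; exact hp.1.2.2⟩, hp.2⟩
  omega



lemma harmonicSumIcc (N : ℕ) :
    ((harmonic N : ℚ) : ℝ) = ∑ a ∈ Finset.Icc 1 N, (a : ℝ)⁻¹ := by
  rw [harmonic_eq_sum_Icc]
  push_cast
  rfl

lemma harmonic_asymp (N : ℕ) (hN : 1 ≤ N) :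
    0 ≤ ((harmonic N : ℚ) : ℝ) - Real.log N - Real.eulerMascheroniConstant ∧
      ((harmonic N : ℚ) : ℝ) - Real.log N - Real.eulerMascheroniConstant ≤ 1 / N := by
  have hN0 : (0 : ℝ) < N := by exact_mod_cast hN
  have h1 := Real.eulerMascheroniConstant_lt_eulerMascheroniSeq' N
  have h2 := Real.eulerMascheroniSeq_lt_eulerMascheroniConstant N
  rw [Real.eulerMascheroniSeq'] at h1
  rw [if_neg (by omega : ¬ N = 0)] at h1
  rw [Real.eulerMascheroniSeq] at h2
  have hlog : Real.log ((N : ℝ) + 1) - Real.log N ≤ 1 / N := by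
    rw [← Real.log_div (by positivity) (by positivity)]
    have h3 := Real.log_le_sub_one_of_pos (show (0:ℝ) < ((N:ℝ)+1)/N by positivity)
    have h4 : ((N:ℝ)+1)/N - 1 = 1/N := by field_simp; ring
    linarith
  constructor <;> linarith

open Real

set_option maxHeartbeats 1600000 in
/-- Dirichlet's divisor asymptotic:
`Σ_{n ≤ x} d(n) = x log x + (2γ - 1) x + O(√x)` as `x → ∞`. -/
theorem dirichlet_divisor_asymptotic :
    ∃ C x₀ : ℝ, 0 < C ∧ 0 < x₀ ∧ ∀ x : ℝ, x₀ ≤ x →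
      |(∑ n ∈ Finset.Icc 1 ⌊x⌋₊, ((Nat.divisors n).card : ℝ))
          - x * Real.log x - (2 * Real.eulerMascheroniConstant - 1) * x|
        ≤ C * Real.sqrt x := by
  refine ⟨16, 4, by norm_num, by norm_num, fun x hx => ?_⟩
  have hx0 : (0:ℝ) < x := by linarith
  have hsx : 2 ≤ Real.sqrt x := by
    have : Real.sqrt 4 ≤ Real.sqrt x := Real.sqrt_le_sqrt hx
    rwa [show (4:ℝ) = 2^2 by norm_num, Real.sqrt_sq (by norm_num)] at this
  have hsx0 : (0:ℝ) < Real.sqrt x := by linarith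
  have hsq : Real.sqrt x * Real.sqrt x = x := Real.mul_self_sqrt hx0.le
  set N := ⌊Real.sqrt x⌋₊ with hNdef
  set M := ⌊x⌋₊ with hMdef
  have hN2 : 2 ≤ N := Nat.le_floor (by exact_mod_cast hsx)
  have hN0 : (0:ℝ) < (N:ℝ) := by exact_mod_cast Nat.lt_of_lt_of_le Nat.zero_lt_two hN2
  have hNle : (N:ℝ) ≤ Real.sqrt x := Nat.floor_le (Real.sqrt_nonneg x)
  have hNgt : Real.sqrt x < (N:ℝ) + 1 := Nat.lt_floor_add_one _
  have hNsq : (N:ℝ) * (N:ℝ) ≤ x := by nlinarith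
  have hx_lt : x < ((N:ℝ) + 1) * ((N:ℝ) + 1) := by nlinarith
  have hMN : N * N ≤ M := by
    apply Nat.le_floor
    push_cast
    exact hNsq
  have hMN2 : M < (N + 1) * (N + 1) := by
    have hMx : (M:ℝ) ≤ x := Nat.floor_le hx0.le
    have : (M:ℝ) < (((N+1) * (N+1) : ℕ) : ℝ) := by push_cast; nlinarith
    exact_mod_cast this
  -- hyperbola identity over ℝ
  have hid := hyperbola_identity M N hMN hMN2
  set T : ℝ := ∑ a ∈ Finset.Icc 1 N, ((M / a : ℕ) : ℝ) with hT
  have hidR : (∑ n ∈ Finset.Icc 1 M, ((Nat.divisors n).card : ℝ))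
      = 2 * T - (N:ℝ) * N := by
    have h := congrArg (Nat.cast : ℕ → ℝ) hid
    push_cast at h
    rw [hT]
    linarith
  -- floor bounds for T
  set H : ℝ := ∑ a ∈ Finset.Icc 1 N, ((a:ℝ))⁻¹ with hH
  have hxH : x * H = ∑ a ∈ Finset.Icc 1 N, x / a := by
    rw [hH, Finset.mul_sum]
    exact Finset.sum_congr rfl fun a _ => (div_eq_mul_inv x a).symm
  have hterm : ∀ a ∈ Finset.Icc 1 N,
      x / a - 1 ≤ ((M / a : ℕ) : ℝ) ∧ ((M / a : ℕ) : ℝ) ≤ x / a := by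
    intro a ha
    rw [Finset.mem_Icc] at ha
    have ha0 : (0:ℝ) < (a:ℝ) := by exact_mod_cast ha.1
    have hfd : (M / a : ℕ) = ⌊x / a⌋₊ := (Nat.floor_div_natCast x a).symm
    constructor
    · rw [hfd]; exact (Nat.sub_one_lt_floor _).le
    · rw [hfd]; exact Nat.floor_le (by positivity)
  have hT_hi : T ≤ x * H := by
    rw [hT, hxH]
    exact Finset.sum_le_sum fun a ha => (hterm a ha).2
  have hT_lo : x * H - N ≤ T := by
    have h1 : ∑ a ∈ Finset.Icc 1 N, (x / a - 1) ≤ T :=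
      Finset.sum_le_sum fun a ha => (hterm a ha).1
    have h2 : ∑ a ∈ Finset.Icc 1 N, (x / a - 1)
        = (∑ a ∈ Finset.Icc 1 N, x / a) - N := by
      rw [Finset.sum_sub_distrib, Finset.sum_const, Nat.card_Icc]
      simp
    rw [hxH]
    linarith
  -- harmonic estimates
  obtain ⟨hg1, hg2⟩ := harmonic_asymp N (by omega)
  have hHh : H = ((harmonic N : ℚ) : ℝ) := (harmonicSumIcc N).symm
  set γ := Real.eulerMascheroniConstant with hγ
  have hA : x * Real.log N + γ * x ≤ x * H := by
    have h := mul_le_mul_of_nonneg_left (by rw [hHh] at *; linarith :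
      Real.log N + γ ≤ H) hx0.le
    nlinarith
  have hB : x * H ≤ x * Real.log N + γ * x + x / N := by
    have h := mul_le_mul_of_nonneg_left (by rw [hHh] at *; linarith :
      H ≤ Real.log N + γ + 1 / N) hx0.le
    have h2 : x * (Real.log N + γ + 1 / N) = x * Real.log N + γ * x + x / N := by
      field_simp
    linarith
  -- log bounds
  have hlog_lo : 0 ≤ x * Real.log x - 2 * (x * Real.log N) := by
    have h1 : Real.log ((N:ℝ)^2) ≤ Real.log x :=
      Real.log_le_log (by positivity) (by nlinarith)
    rw [Real.log_pow] at h1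
    push_cast at h1
    nlinarith
  have hlog_hi : x * Real.log x - 2 * (x * Real.log N) ≤ 3 * (x / N) := by
    have hd : Real.log x - Real.log ((N:ℝ)^2) = Real.log (x / (N:ℝ)^2) :=
      (Real.log_div hx0.ne' (by positivity)).symm
    have h3 := Real.log_le_sub_one_of_pos (show (0:ℝ) < x / (N:ℝ)^2 by positivity)
    have h4 : x / (N:ℝ)^2 - 1 ≤ 3 / N := by
      rw [sub_le_iff_le_add, div_le_iff₀ (by positivity : (0:ℝ) < (N:ℝ)^2)]
      have : (3 / (N:ℝ) + 1) * (N:ℝ)^2 = 3 * N + (N:ℝ)^2 := by field_simp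
      rw [this]
      nlinarith
    have hpow : Real.log ((N:ℝ)^2) = 2 * Real.log N := by
      rw [Real.log_pow]; push_cast; ring
    have h5 : Real.log x - 2 * Real.log N ≤ 3 / N := by
      have hd2 : Real.log x - 2 * Real.log N = Real.log (x / (N:ℝ)^2) := by
        rw [Real.log_div hx0.ne' (by positivity), hpow]
      rw [hd2]; linarith
    have h6 := mul_le_mul_of_nonneg_left h5 hx0.le
    have h7 : x * (3 / (N:ℝ)) = 3 * (x / N) := by ring
    nlinarith
  -- size bounds
  have hxmn : x - (N:ℝ) * N ≤ 3 * N := by nlinarith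
  have hxmn0 : 0 ≤ x - (N:ℝ) * N := by linarith
  have hxN : x / N ≤ 2 * Real.sqrt x := by
    have hNhalf : Real.sqrt x / 2 ≤ (N:ℝ) := by linarith
    rw [div_le_iff₀ hN0]
    nlinarith
  -- assemble
  rw [hidR, abs_le]
  constructor
  · nlinarith
  · nlinarith
end

section
/- For the operator A = (−Δ)⊗(−Δ) on the torus S¹ × S¹, the nonzero eigenvalues are exactly the numbers n²m² with n,m positive integers, and the counting function satisfies N_A(λ²) = 4 Σ_{n ≤ λ} d(n) for λ > 0, where d is the divisor function. -/
lemma card_divisorsAntidiagonal_eq (n : ℕ) :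
    (Nat.divisorsAntidiagonal n).card = n.divisors.card := by
  rw [← Nat.image_fst_divisorsAntidiagonal]
  refine (Finset.card_image_of_injOn ?_).symm
  intro p hp q hq h
  simp only [Finset.mem_coe, Nat.mem_divisorsAntidiagonal] at hp hq
  have h1 : p.1 ≠ 0 := by
    intro h0; exact hp.2 (by rw [← hp.1, h0, zero_mul])
  have h2 : p.2 = q.2 := by
    have := hq.1
    rw [← h] at this
    exact Nat.eq_of_mul_eq_mul_left (Nat.pos_of_ne_zero h1) (hp.1.trans this.symm)
  exact Prod.ext h h2

/-- Counting function of `(−Δ)⊗(−Δ)` on the torus: the number of pairs of nonzero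
integers `(n, m)` with `n² m² ≤ λ²` equals `4 Σ_{k ≤ λ} d(k)`. -/
theorem counting_tensor_laplacian_eq_divisor_sum (lam : ℝ) (hlam : 0 < lam) :
    {p : ℤ × ℤ | p.1 ≠ 0 ∧ p.2 ≠ 0 ∧
        ((p.1 : ℝ) ^ 2 * (p.2 : ℝ) ^ 2 ≤ lam ^ 2)}.ncard
      = 4 * ∑ k ∈ Finset.Icc 1 ⌊lam⌋₊, (Nat.divisors k).card := by
  classical
  set N := ⌊lam⌋₊ with hN
  -- key equivalence
  have key : ∀ n m : ℤ, ((n : ℝ) ^ 2 * (m : ℝ) ^ 2 ≤ lam ^ 2 ↔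
      n.natAbs * m.natAbs ≤ N) := by
    intro n m
    rw [← mul_pow, ← sq_abs ((n : ℝ) * (m : ℝ)),
      pow_le_pow_iff_left₀ (abs_nonneg _) hlam.le two_ne_zero,
      ← Int.cast_mul, ← Int.cast_abs, Int.abs_eq_natAbs, Int.natAbs_mul]
    rw [Int.cast_natCast, hN]
    exact (Nat.le_floor_iff hlam.le).symm
  set T : Finset (ℤ × ℤ) :=
    (Finset.Icc (-(N : ℤ)) N ×ˢ Finset.Icc (-(N : ℤ)) N).filter
      (fun p => p.1 ≠ 0 ∧ p.2 ≠ 0 ∧ p.1.natAbs * p.2.natAbs ≤ N) with hT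
  have hset : {p : ℤ × ℤ | p.1 ≠ 0 ∧ p.2 ≠ 0 ∧
      ((p.1 : ℝ) ^ 2 * (p.2 : ℝ) ^ 2 ≤ lam ^ 2)} = ↑T := by
    ext ⟨n, m⟩
    simp only [Set.mem_setOf_eq, hT, Finset.coe_filter, Finset.mem_product,
      Finset.mem_Icc]
    constructor
    · rintro ⟨hn, hm, h⟩
      have h' := (key n m).mp h
      have hn1 : 1 ≤ n.natAbs := Int.natAbs_pos.mpr hn
      have hm1 : 1 ≤ m.natAbs := Int.natAbs_pos.mpr hm
      have hna : n.natAbs ≤ N := le_trans (Nat.le_mul_of_pos_right _ hm1) h'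
      have hma : m.natAbs ≤ N := le_trans (Nat.le_mul_of_pos_left _ hn1) h'
      refine ⟨⟨⟨?_, ?_⟩, ?_, ?_⟩, hn, hm, h'⟩ <;> omega
    · rintro ⟨-, hn, hm, h⟩
      exact ⟨hn, hm, (key n m).mpr h⟩
  rw [hset, Set.ncard_coe_finset]
  set D : Finset (ℕ × ℕ) := (Finset.Icc 1 N).biUnion Nat.divisorsAntidiagonal with hD
  have hcard : T.card = ((Finset.univ : Finset (Bool × Bool)) ×ˢ D).card := by
    refine Finset.card_bij'
      (fun p _ => ((decide (0 < p.1), decide (0 < p.2)), (p.1.natAbs, p.2.natAbs)))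
      (fun q _ => ((if q.1.1 then (q.2.1 : ℤ) else -(q.2.1 : ℤ)),
        (if q.1.2 then (q.2.2 : ℤ) else -(q.2.2 : ℤ)))) ?_ ?_ ?_ ?_
    · rintro ⟨n, m⟩ hp
      simp only [hT, Finset.mem_filter] at hp
      obtain ⟨-, hn, hm, hle⟩ := hp
      have hn1 : 1 ≤ n.natAbs := Int.natAbs_pos.mpr hn
      have hm1 : 1 ≤ m.natAbs := Int.natAbs_pos.mpr hm
      simp only [Finset.mem_product, Finset.mem_univ, true_and, hD,
        Finset.mem_biUnion]
      exact ⟨n.natAbs * m.natAbs, Finset.mem_Icc.mpr ⟨Nat.one_le_iff_ne_zero.mpr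
        (by positivity), hle⟩, Nat.mem_divisorsAntidiagonal.mpr ⟨rfl, by positivity⟩⟩
    · rintro ⟨⟨s, t⟩, a, b⟩ hq
      simp only [Finset.mem_product, Finset.mem_univ, true_and, hD,
        Finset.mem_biUnion] at hq
      obtain ⟨k, hk, hab⟩ := hq
      rw [Nat.mem_divisorsAntidiagonal] at hab
      rw [Finset.mem_Icc] at hk
      have hab1 : a * b = k := hab.1
      have hk0 : k ≠ 0 := hab.2
      have ha1 : 1 ≤ a := by
        rcases Nat.eq_zero_or_pos a with h0 | h
        · exact absurd (by rw [← hab1, h0, zero_mul]) (Ne.symm hk0)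
        exact h
      have hb1 : 1 ≤ b := by
        rcases Nat.eq_zero_or_pos b with h0 | h
        · exact absurd (by rw [← hab1, h0, mul_zero]) (Ne.symm hk0)
        exact h
      have habN : a * b ≤ N := hab1 ▸ hk.2
      have haN : a ≤ N := le_trans (Nat.le_mul_of_pos_right _ hb1) habN
      have hbN : b ≤ N := le_trans (Nat.le_mul_of_pos_left _ ha1) habN
      simp only [hT, Finset.mem_filter, Finset.mem_product, Finset.mem_Icc]
      refine ⟨⟨⟨?_, ?_⟩, ?_, ?_⟩, ?_, ?_, ?_⟩
      · cases s <;> simp <;> omega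
      · cases s <;> simp <;> omega
      · cases t <;> simp <;> omega
      · cases t <;> simp <;> omega
      · cases s <;> simp <;> omega
      · cases t <;> simp <;> omega
      · cases s <;> cases t <;> simp <;> omega
    · rintro ⟨n, m⟩ hp
      simp only [hT, Finset.mem_filter] at hp
      obtain ⟨-, hn, hm, -⟩ := hp
      have : (if decide (0 < n) = true then (n.natAbs : ℤ) else -(n.natAbs : ℤ)) = n := by
        split <;> rename_i h <;> simp only [decide_eq_true_eq] at h <;> omega
      have h2 : (if decide (0 < m) = true then (m.natAbs : ℤ) else -(m.natAbs : ℤ)) = m := by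
        split <;> rename_i h <;> simp only [decide_eq_true_eq] at h <;> omega
      exact Prod.ext this h2
    · rintro ⟨⟨s, t⟩, a, b⟩ hq
      simp only [Finset.mem_product, Finset.mem_univ, true_and, hD,
        Finset.mem_biUnion] at hq
      obtain ⟨k, hk, hab⟩ := hq
      rw [Nat.mem_divisorsAntidiagonal] at hab
      have hab1 : a * b = k := hab.1
      have hk0 : k ≠ 0 := hab.2
      have ha1 : 1 ≤ a := by
        rcases Nat.eq_zero_or_pos a with h0 | h
        · exact absurd (by rw [← hab1, h0, zero_mul]) (Ne.symm hk0)
        exact h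
      have hb1 : 1 ≤ b := by
        rcases Nat.eq_zero_or_pos b with h0 | h
        · exact absurd (by rw [← hab1, h0, mul_zero]) (Ne.symm hk0)
        exact h
      cases s <;> cases t <;> simp <;> omega
  rw [hcard, Finset.card_product, Finset.card_univ]
  have hDcard : D.card = ∑ k ∈ Finset.Icc 1 N, (Nat.divisors k).card := by
    rw [hD, Finset.card_biUnion]
    · exact Finset.sum_congr rfl fun k _ => card_divisorsAntidiagonal_eq k
    · intro x hx y hy hxy
      simp only [Finset.disjoint_left]
      intro p hpx hpy
      rw [Nat.mem_divisorsAntidiagonal] at hpx hpy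
      exact hxy (hpx.1.symm.trans hpy.1)
  rw [hDcard]
  simp [Fintype.card_prod]
end

section
/- The function c ↦ γ_c (for c > 0) satisfies: γ_c → +∞ as c → 0⁺ and γ_c → −∞ as c → +∞. -/
open Filter Topology

lemma log_diff_le {x : ℝ} (hx : 0 < x) : Real.log (x+1) - Real.log x ≤ 1/x := by
  rw [← Real.log_div (by positivity) hx.ne']
  have h := Real.log_le_sub_one_of_pos (show (0:ℝ) < (x+1)/x by positivity)
  have : (x+1)/x - 1 = 1/x := by field_simp; ring
  linarith

lemma le_log_diff {x : ℝ} (hx : 0 < x) : 1/(x+1) ≤ Real.log (x+1) - Real.log x := by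
  have h := Real.log_le_sub_one_of_pos (show (0:ℝ) < x/(x+1) by positivity)
  rw [Real.log_div hx.ne' (by positivity)] at h
  have : x/(x+1) - 1 = -(1/(x+1)) := by field_simp; ring
  linarith

lemma low_sum {c : ℝ} (hc : 0 < c) (hc1 : c ≤ 1) (n : ℕ) :
    Real.log (n+2) - Real.log 2 ≤ ∑ i ∈ Finset.range n, 1 / Real.sqrt (c + ((i:ℝ)+1) ^ 2) := by
  induction n with
  | zero => simp
  | succ n ih =>
    rw [Finset.sum_range_succ]
    have h1 : Real.log ((n:ℝ)+3) - Real.log ((n:ℝ)+2) ≤ 1/((n:ℝ)+2) := by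
      have := log_diff_le (show (0:ℝ) < (n:ℝ)+2 by positivity)
      have e : ((n:ℝ)+2)+1 = (n:ℝ)+3 := by ring
      rw [e] at this; exact this
    have h2 : 1/((n:ℝ)+2) ≤ 1 / Real.sqrt (c + ((n:ℝ)+1) ^ 2) := by
      have hle : Real.sqrt (c + ((n:ℝ)+1) ^ 2) ≤ (n:ℝ)+2 := by
        rw [show ((n:ℝ)+2) = Real.sqrt (((n:ℝ)+2)^2) by
          rw [Real.sqrt_sq (by positivity)]]
        apply Real.sqrt_le_sqrt
        have hn0 : (0:ℝ) ≤ (n:ℝ) := Nat.cast_nonneg n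
        nlinarith
      apply one_div_le_one_div_of_le _ hle
      positivity
    have e : ((n+1:ℕ) : ℝ) + 2 = (n:ℝ) + 3 := by push_cast; ring
    rw [e]
    linarith

lemma lowS {c : ℝ} (hc : 0 < c) (hc1 : c ≤ 1) {τ : ℝ} (hτ : 1 ≤ τ) :
    1/Real.sqrt c - Real.log 2 ≤
      (∑ i ∈ Finset.range (⌊τ⌋₊ + 1), 1 / Real.sqrt (c + (i : ℝ) ^ 2)) - Real.log τ := by
  set n := ⌊τ⌋₊ with hn
  have hsplit : ∑ i ∈ Finset.range (n + 1), 1 / Real.sqrt (c + (i : ℝ) ^ 2)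
      = (∑ i ∈ Finset.range n, 1 / Real.sqrt (c + ((i:ℝ)+1) ^ 2)) + 1/Real.sqrt c := by
    rw [Finset.sum_range_succ']
    simp [Nat.cast_add]
  have h1 := low_sum hc hc1 n
  have hτn : τ < (n:ℝ) + 1 := Nat.lt_floor_add_one τ
  have hlog : Real.log τ ≤ Real.log ((n:ℝ)+2) :=
    Real.log_le_log (by linarith) (by linarith)
  rw [hsplit]
  linarith



lemma up_tail {c : ℝ} (hc : 0 ≤ c) {m : ℕ} (hm : 1 ≤ m) (k : ℕ) :
    ∑ i ∈ Finset.Ico (m+1) (m+1+k), 1 / Real.sqrt (c + (i:ℝ) ^ 2)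
      ≤ Real.log ((m:ℝ)+k) - Real.log m := by
  induction k with
  | zero => simp
  | succ k ih =>
    rw [show m+1+(k+1) = (m+1+k)+1 from rfl,
        Finset.sum_Ico_succ_top (by omega)]
    have hx : (0:ℝ) < (m:ℝ)+k := by
      have : (1:ℝ) ≤ (m:ℝ) := by exact_mod_cast hm
      positivity
    have h1 : 1/((m:ℝ)+k+1) ≤ Real.log ((m:ℝ)+k+1) - Real.log ((m:ℝ)+k) := by
      have := le_log_diff hx; linarith
    have h2 : 1 / Real.sqrt (c + ((m+1+k:ℕ):ℝ) ^ 2) ≤ 1/((m:ℝ)+k+1) := by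
      have hle : (m:ℝ)+k+1 ≤ Real.sqrt (c + ((m+1+k:ℕ):ℝ) ^ 2) := by
        rw [show ((m:ℝ)+k+1) = Real.sqrt (((m:ℝ)+k+1)^2) by
          rw [Real.sqrt_sq (by positivity)]]
        apply Real.sqrt_le_sqrt
        push_cast; nlinarith
      apply one_div_le_one_div_of_le (by positivity) hle
    have e : ((m:ℝ)) + ((k+1:ℕ):ℝ) = (m:ℝ)+k+1 := by push_cast; ring
    rw [e]
    linarith

lemma upS {c : ℝ} (hc : 4 ≤ c) {τ : ℝ} (hτ : Real.sqrt c + 2 ≤ τ) :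
    (∑ i ∈ Finset.range (⌊τ⌋₊ + 1), 1 / Real.sqrt (c + (i : ℝ) ^ 2)) - Real.log τ
      ≤ 2 + Real.log 2 - (1/2) * Real.log c := by
  have hc0 : (0:ℝ) < c := by linarith
  have hs2 : (2:ℝ) ≤ Real.sqrt c := by
    rw [show (2:ℝ) = Real.sqrt 4 by rw [show (4:ℝ) = 2^2 by norm_num, Real.sqrt_sq]; norm_num]
    exact Real.sqrt_le_sqrt hc
  have hsp : (0:ℝ) < Real.sqrt c := by linarith
  set m := ⌊Real.sqrt c⌋₊ with hmdef
  set n := ⌊τ⌋₊ with hndef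
  have hm2 : 2 ≤ m := Nat.le_floor (by exact_mod_cast hs2)
  have hmle : (m:ℝ) ≤ Real.sqrt c := Nat.floor_le hsp.le
  have hmgt : Real.sqrt c < (m:ℝ) + 1 := Nat.lt_floor_add_one _
  have hτ1 : (4:ℝ) ≤ τ := by linarith
  have hnτ : (n:ℝ) ≤ τ := Nat.floor_le (by linarith)
  have hτn : τ < (n:ℝ) + 1 := Nat.lt_floor_add_one τ
  have hmn : m + 1 ≤ n := by
    have h : ((m:ℝ)) + 1 < (n:ℝ) := by linarith
    have h2 : m + 1 < n := by exact_mod_cast h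
    omega
  -- split the sum
  have hsplit : ∑ i ∈ Finset.range (n + 1), 1 / Real.sqrt (c + (i : ℝ) ^ 2)
      = (∑ i ∈ Finset.range (m+1), 1 / Real.sqrt (c + (i : ℝ) ^ 2))
        + ∑ i ∈ Finset.Ico (m+1) (n+1), 1 / Real.sqrt (c + (i:ℝ) ^ 2) := by
    rw [Finset.range_eq_Ico, ← Finset.sum_Ico_consecutive _ (Nat.zero_le (m+1)) (by omega),
      ← Finset.range_eq_Ico]
  have hhead : (∑ i ∈ Finset.range (m+1), 1 / Real.sqrt (c + (i : ℝ) ^ 2))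
      ≤ ((m:ℝ)+1) * (1/Real.sqrt c) := by
    have := Finset.sum_le_card_nsmul (Finset.range (m+1))
      (fun i => 1 / Real.sqrt (c + (i : ℝ) ^ 2)) (1/Real.sqrt c)
      (fun i _ => by
        apply one_div_le_one_div_of_le hsp
        apply Real.sqrt_le_sqrt
        have : (0:ℝ) ≤ (i:ℝ)^2 := by positivity
        linarith)
    simpa [Finset.card_range, nsmul_eq_mul] using this
  have hhead2 : ((m:ℝ)+1) * (1/Real.sqrt c) ≤ 2 := by
    rw [mul_one_div, div_le_iff₀ hsp]
    nlinarith
  have htail : ∑ i ∈ Finset.Ico (m+1) (n+1), 1 / Real.sqrt (c + (i:ℝ) ^ 2)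
      ≤ Real.log n - Real.log m := by
    have h := up_tail hc0.le (by omega : 1 ≤ m) (n - m)
    rw [show m+1+(n-m) = n+1 by omega] at h
    rw [show ((m:ℝ)) + ((n-m:ℕ):ℝ) = (n:ℝ) by
      have : ((n-m:ℕ):ℝ) = (n:ℝ) - m := by
        rw [Nat.cast_sub (by omega)]
      linarith] at h
    exact h
  have hn0 : (0:ℝ) < n := by
    have h : 0 < n := by omega
    exact_mod_cast h
  have hlogn : Real.log n ≤ Real.log τ := Real.log_le_log hn0 hnτ
  have hlogm : Real.log c / 2 - Real.log 2 ≤ Real.log m := by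
    have h1 : Real.sqrt c / 2 ≤ (m:ℝ) := by linarith
    have h2 : Real.log (Real.sqrt c / 2) ≤ Real.log m :=
      Real.log_le_log (by positivity) h1
    rw [Real.log_div hsp.ne' (by norm_num), Real.log_sqrt hc0.le] at h2
    linarith
  rw [hsplit]
  linarith


/-- The generalized Euler–Mascheroni constant `γ_c` tends to `+∞` as `c → 0⁺` and
to `−∞` as `c → +∞`. -/
theorem generalized_eulerMascheroni_limits (γ : ℝ → ℝ)
    (hγ : ∀ c : ℝ, 0 < c → Tendsto
      (fun τ : ℝ =>
        (∑ i ∈ Finset.range (⌊τ⌋₊ + 1), 1 / Real.sqrt (c + (i : ℝ) ^ 2))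
          - Real.log τ)
      atTop (𝓝 (γ c))) :
    Tendsto γ (𝓝[>] (0 : ℝ)) atTop ∧ Tendsto γ atTop atBot := by
  have hlow : ∀ c : ℝ, 0 < c → c ≤ 1 → 1/Real.sqrt c - Real.log 2 ≤ γ c := by
    intro c h1 h2
    refine ge_of_tendsto (hγ c h1) ?_
    filter_upwards [eventually_ge_atTop (1:ℝ)] with τ hτ
    exact lowS h1 h2 hτ
  have hup : ∀ c : ℝ, 4 ≤ c → γ c ≤ 2 + Real.log 2 - (1/2) * Real.log c := by
    intro c hc
    refine le_of_tendsto (hγ c (by linarith)) ?_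
    filter_upwards [eventually_ge_atTop (Real.sqrt c + 2)] with τ hτ
    exact upS hc hτ
  constructor
  · have hb : Tendsto (fun c : ℝ => 1/Real.sqrt c - Real.log 2) (𝓝[>] (0:ℝ)) atTop := by
      apply tendsto_atTop_add_const_right
      have hs : Tendsto Real.sqrt (𝓝[>] (0:ℝ)) (𝓝[>] (0:ℝ)) := by
        apply tendsto_nhdsWithin_of_tendsto_nhds_of_eventually_within
        · have h := (Real.continuous_sqrt.tendsto 0).mono_left
            (nhdsWithin_le_nhds : 𝓝[>] (0:ℝ) ≤ 𝓝 0)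
          simpa [Real.sqrt_zero] using h
        · filter_upwards [self_mem_nhdsWithin] with x hx
          exact Real.sqrt_pos.mpr hx
      simpa [one_div, Function.comp_def] using tendsto_inv_nhdsGT_zero.comp hs
    refine tendsto_atTop_mono' _ ?_ hb
    filter_upwards [Ioo_mem_nhdsGT_of_mem (Set.left_mem_Ico.mpr one_pos)] with c hc
    exact hlow c hc.1 hc.2.le
  · have hb : Tendsto (fun c : ℝ => 2 + Real.log 2 - (1/2) * Real.log c) atTop atBot := by
      have h1 : Tendsto (fun c : ℝ => (1/2) * Real.log c) atTop atTop :=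
        Real.tendsto_log_atTop.const_mul_atTop (by norm_num)
      have h2 : Tendsto (fun c : ℝ => -((1/2) * Real.log c)) atTop atBot :=
        tendsto_neg_atTop_atBot.comp h1
      have := tendsto_atBot_add_const_left atTop (2 + Real.log 2) h2
      simpa [sub_eq_add_neg] using this
    refine tendsto_atBot_mono' _ ?_ hb
    filter_upwards [eventually_ge_atTop (4:ℝ)] with c hc
    exact hup c hc
end
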